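/- Let n ∈ ℕ and α a partition of n. For a partition μ = (1^{m₁}, 2^{m₂}, …) let b_μ = ∏_i m_i!. Then the determinant of the submatrix X^(α) = (χ^λ_μ)_{λ,μ ≥ α} of the character table of S_n (rows and columns indexed by partitions λ, μ of n that are ≥ α in lexicographic order) equals ∏_{μ ≥ α} b_μ. -/

import Mathlib

set_option maxHeartbeats 1000000


open scoped Classical

namespace SnTable

variable {n : ℕ}

/-- The parts of a partition, listed in weakly decreasing order. -/
def descList (μ : Nat.Partition n) : List ℕ := (μ.parts.sort (· ≤ ·)).reverse

/-- Strict lexicographic order on partitions of `n` (comparing the lists of parts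
written in decreasing order). -/
def plex (μ ν : Nat.Partition n) : Prop := List.Lex (· < ·) (descList μ) (descList ν)

/-- Weak lexicographic order on partitions of `n`. -/
def plexLE (μ ν : Nat.Partition n) : Prop := μ = ν ∨ plex μ ν

/-- `a_μ = ∏ i^{m_i(μ)}`, the product of the parts of `μ`. -/
def aNum (μ : Nat.Partition n) : ℕ := μ.parts.prod

/-- `b_μ = ∏ m_i(μ)!`, the product of the factorials of the multiplicities. -/
def bNum (μ : Nat.Partition n) : ℕ :=
  ∏ i ∈ μ.parts.toFinset, (μ.parts.count i).factorial

/-- `z_μ = a_μ b_μ`, the centralizer order of an element of cycle type `μ` in `S_n`. -/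
def zNum (μ : Nat.Partition n) : ℕ := aNum μ * bNum μ

/-- The cycle type of a permutation of `Fin n`, as a partition of `n`. -/
def cycleTypePartition (g : Equiv.Perm (Fin n)) : Nat.Partition n :=
  (Fintype.card_fin n) ▸ g.partition

/-- The value at `g` of the permutation character `ξ^λ` of `S_n` obtained by inducing the
trivial character from the Young subgroup `S_λ`: it counts the ordered set partitions of
`Fin n` with block sizes `λ₁ ≥ λ₂ ≥ …` that are fixed by `g`. -/
def permChar (lam : Nat.Partition n) (g : Equiv.Perm (Fin n)) : ℕ :=
  Fintype.card {f : Fin n → Fin (descList lam).length //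
    (∀ x, f (g x) = f x) ∧
    ∀ j, (Finset.univ.filter fun x => f x = j).card = (descList lam).get j}

/-- `X` is the character table of the symmetric group `S_n`, with rows and columns indexed
by the partitions of `n`: each row is an irreducible character (as a class function, via
cycle types), distinct rows are distinct characters, and the labelling is the standard one,
pinned down by the fact that the transition matrix expressing the Young permutation
characters `ξ^λ` in terms of the rows of `X` is unitriangular with respect to the
lexicographic order. -/
def IsCharTable (X : Nat.Partition n → Nat.Partition n → ℤ) : Prop :=
  (∀ lam : Nat.Partition n, ∃ V : FDRep ℂ (Equiv.Perm (Fin n)),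
      CategoryTheory.Simple V ∧
      ∀ g : Equiv.Perm (Fin n), V.character g = (X lam (cycleTypePartition g) : ℂ)) ∧
  (∃ d : Nat.Partition n → Nat.Partition n → ℤ,
      (∀ lam, d lam lam = 1) ∧
      (∀ lam mu, d lam mu ≠ 0 → plexLE lam mu) ∧
      (∀ lam (g : Equiv.Perm (Fin n)),
        (permChar lam g : ℤ) = ∑ mu, d lam mu * X mu (cycleTypePartition g))) ∧
  Function.Injective X







lemma coe_descList (μ : Nat.Partition n) : (descList μ : Multiset ℕ) = μ.parts := by
  rw [descList, Multiset.coe_reverse, Multiset.sort_eq]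

lemma descList_sorted (μ : Nat.Partition n) : (descList μ).Pairwise (· ≥ ·) := by
  rw [descList, List.pairwise_reverse]
  exact μ.parts.pairwise_sort (· ≤ ·)

lemma descList_sum (μ : Nat.Partition n) : (descList μ).sum = n := by
  have := congrArg Multiset.sum (coe_descList μ)
  simpa [μ.parts_sum] using this

lemma descList_pos (μ : Nat.Partition n) {i : ℕ} (hi : i ∈ descList μ) : 0 < i := by
  apply μ.parts_pos
  rw [← coe_descList μ]
  exact hi

lemma descList_injective : Function.Injective (descList (n := n)) := by
  intro μ ν h
  ext1
  rw [← coe_descList μ, ← coe_descList ν, h]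

lemma plex_trichot (μ ν : Nat.Partition n) : plex μ ν ∨ μ = ν ∨ plex ν μ := by
  rcases trichotomous_of (List.Lex ((· < ·) : ℕ → ℕ → Prop)) (descList μ) (descList ν) with h | h | h
  · exact Or.inl h
  · exact Or.inr (Or.inl (descList_injective h))
  · exact Or.inr (Or.inr h)

lemma plex_irrefl (μ : Nat.Partition n) : ¬ plex μ μ := irrefl_of (List.Lex (· < ·)) _

lemma plex_trans {μ ν ρ : Nat.Partition n} (h1 : plex μ ν) (h2 : plex ν ρ) : plex μ ρ :=
  List.lex_trans (fun a b => lt_trans a b) h1 h2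

lemma plexLE_trans {μ ν ρ : Nat.Partition n} (h1 : plexLE μ ν) (h2 : plexLE ν ρ) : plexLE μ ρ := by
  rcases h1 with rfl | h1
  · exact h2
  rcases h2 with rfl | h2
  · exact Or.inr h1
  · exact Or.inr (plex_trans h1 h2)

lemma plexLE_of_not_plex {μ ν : Nat.Partition n} (h : ¬ plex ν μ) : plexLE μ ν := by
  rcases plex_trichot μ ν with h1 | h1 | h1
  · exact Or.inr h1
  · exact Or.inl h1
  · exact absurd h1 h

lemma not_plex_of_plexLE {μ ν : Nat.Partition n} (h : plexLE μ ν) : ¬ plex ν μ := by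
  rcases h with rfl | h
  · exact plex_irrefl μ
  · intro h2
    exact plex_irrefl μ (plex_trans h h2)



lemma strictMono_fin_le {m N : ℕ} {v : Fin m → Fin N} (hv : StrictMono v) :
    ∀ r : Fin m, (r : ℕ) ≤ (v r : ℕ) := by
  have : ∀ k, ∀ hk : k < m, k ≤ (v ⟨k, hk⟩ : ℕ) := by
    intro k
    induction k with
    | zero => intro hk; exact Nat.zero_le _
    | succ k ih =>
      intro hk
      have hk' : k < m := Nat.lt_of_succ_lt hk
      have h1 : (v ⟨k, hk'⟩ : ℕ) < (v ⟨k + 1, hk⟩ : ℕ) := by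
        exact_mod_cast hv (show (⟨k, hk'⟩ : Fin m) < ⟨k + 1, hk⟩ by simp [Fin.lt_def])
      exact Nat.succ_le_of_lt (lt_of_le_of_lt (ih hk') h1)
  exact fun r => by simpa using this r.1 r.2

lemma sum_take_filter (L : List ℕ) : ∀ i, i ≤ L.length →
    (L.take i).sum = ∑ r ∈ Finset.univ.filter (fun r : Fin L.length => (r : ℕ) < i), L.get r := by
  intro i
  induction i with
  | zero => intro _; simp
  | succ i ih =>
    intro h
    have hi : i < L.length := h
    have hfilter : Finset.univ.filter (fun r : Fin L.length => (r : ℕ) < i + 1) =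
        insert ⟨i, hi⟩ (Finset.univ.filter (fun r : Fin L.length => (r : ℕ) < i)) := by
      ext r
      simp only [Finset.mem_filter, Finset.mem_univ, true_and, Finset.mem_insert]
      constructor
      · intro hr
        rcases Nat.lt_succ_iff_lt_or_eq.mp hr with h' | h'
        · exact Or.inr h'
        · exact Or.inl (Fin.ext h')
      · rintro (rfl | hr)
        · exact Nat.lt_succ_self i
        · exact Nat.lt_succ_of_lt hr
    rw [hfilter, Finset.sum_insert (by simp), ← ih (le_of_lt hi),
      ← List.take_concat_get' L i hi]
    rw [List.sum_append]
    simp [Nat.add_comm]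

lemma sum_take_mono (L : List ℕ) {a i : ℕ} (h : a ≤ i) : (L.take a).sum ≤ (L.take i).sum := by
  have h1 : L.take a = (L.take i).take a := by rw [List.take_take, min_eq_left h]
  rw [h1]
  exact List.Sublist.sum_le_sum (List.take_sublist _ _) (fun x _ => Nat.zero_le x)

lemma sum_finset_le_take {L : List ℕ} (hs : L.Pairwise (· ≥ ·)) (T : Finset (Fin L.length))
    {i : ℕ} (hT : T.card ≤ i) : (∑ j ∈ T, L.get j) ≤ (L.take i).sum := by
  set m := T.card with hm
  have hmlen : m ≤ L.length := by
    calc m ≤ Fintype.card (Fin L.length) := hm ▸ Finset.card_le_univ T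
      _ = L.length := Fintype.card_fin _
  set f := T.orderEmbOfFin (rfl : T.card = m) with hf
  have hlt : ∀ r : Fin m, (r : ℕ) < L.length :=
    fun r => lt_of_le_of_lt (strictMono_fin_le f.strictMono r) (f r).2
  have h1 : (∑ r : Fin m, L.get (f r)) = ∑ j ∈ T, L.get j := by
    apply Finset.sum_bij (fun r _ => f r)
    · intro r _; exact Finset.orderEmbOfFin_mem T _ r
    · intro r _ r' _ h; exact f.injective h
    · intro j hj
      have : j ∈ Set.range f := by
        rw [Finset.range_orderEmbOfFin]; exact Finset.mem_coe.mpr hj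
      obtain ⟨r, hr⟩ := this
      exact ⟨r, Finset.mem_univ r, hr⟩
    · intros; rfl
  have h2 : (∑ r : Fin m, L.get (f r)) ≤ ∑ r : Fin m, L.get ⟨r, hlt r⟩ := by
    apply Finset.sum_le_sum
    intro r _
    exact hs.rel_get_of_le (by exact_mod_cast strictMono_fin_le f.strictMono r)
  have h3 : (∑ r : Fin m, L.get ⟨r, hlt r⟩) = (L.take m).sum := by
    rw [sum_take_filter L m hmlen]
    apply Finset.sum_bij (fun (r : Fin m) _ => (⟨r, hlt r⟩ : Fin L.length))
    · intro r _; simp [r.2]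
    · intro r _ r' _ h
      exact Fin.ext (by simpa using congrArg Fin.val h)
    · intro j hj
      simp only [Finset.mem_filter, Finset.mem_univ, true_and] at hj
      exact ⟨⟨j, hj⟩, Finset.mem_univ _, rfl⟩
    · intros; rfl
  calc (∑ j ∈ T, L.get j) = ∑ r : Fin m, L.get (f r) := h1.symm
    _ ≤ ∑ r : Fin m, L.get ⟨r, hlt r⟩ := h2
    _ = (L.take m).sum := h3
    _ ≤ (L.take i).sum := sum_take_mono L hT


lemma card_subtype_eq_count {α : Type*} [Fintype α] (w : α → ℕ) (v : ℕ) :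
    Fintype.card {a : α // w a = v} = Multiset.count v (Finset.univ.val.map w) := by
  rw [Multiset.count_map, Fintype.card_subtype, Finset.card, Finset.filter_val]
  congr 1
  exact Multiset.filter_congr (fun x _ => by constructor <;> exact Eq.symm)

lemma exists_equiv_of_map_eq {Q : Type*} [Fintype Q] (w : Q → ℕ) (L : List ℕ)
    (h : Finset.univ.val.map w = (L : Multiset ℕ)) :
    ∃ E : Fin L.length ≃ Q, ∀ r, w (E r) = L.get r := by
  have hL : (Finset.univ.val.map L.get : Multiset ℕ) = (L : Multiset ℕ) := by
    rw [Fin.univ_val_map, List.ofFn_get]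
  have hcount : ∀ v, Fintype.card {r : Fin L.length // L.get r = v}
      = Fintype.card {O : Q // w O = v} := by
    intro v
    rw [card_subtype_eq_count, card_subtype_eq_count, hL, h]
  set e : ∀ v : ℕ, {r : Fin L.length // L.get r = v} ≃ {O : Q // w O = v} :=
    fun v => Fintype.equivOfCardEq (hcount v) with he
  have helper2 : ∀ (v v' : ℕ), v = v' → ∀ (O : Q) (h1 : w O = v) (h2 : w O = v'),
      ((e v).symm ⟨O, h1⟩).1 = ((e v').symm ⟨O, h2⟩).1 := by
    intro v v' hvv
    subst hvv
    intro O h1 h2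
    rfl
  have helper3 : ∀ (v v' : ℕ), v = v' → ∀ (r : Fin L.length) (h1 : L.get r = v)
      (h2 : L.get r = v'), ((e v) ⟨r, h1⟩).1 = ((e v') ⟨r, h2⟩).1 := by
    intro v v' hvv
    subst hvv
    intro r h1 h2
    rfl
  refine ⟨⟨fun r => (e (L.get r) ⟨r, rfl⟩).1, fun O => ((e (w O)).symm ⟨O, rfl⟩).1, ?_, ?_⟩,
    fun r => (e (L.get r) ⟨r, rfl⟩).2⟩
  · intro r
    set y := e (L.get r) ⟨r, rfl⟩ with hy
    show ((e (w y.1)).symm ⟨y.1, rfl⟩).1 = r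
    rw [helper2 (w y.1) (L.get r) y.2 y.1 rfl y.2]
    have : (⟨y.1, y.2⟩ : {O : Q // w O = L.get r}) = y := rfl
    rw [this, hy, Equiv.symm_apply_apply]
  · intro O
    set y := (e (w O)).symm ⟨O, rfl⟩ with hy
    show ((e (L.get y.1)) ⟨y.1, rfl⟩).1 = O
    rw [helper3 (L.get y.1) (w O) y.2 y.1 rfl y.2]
    have : (⟨y.1, y.2⟩ : {r : Fin L.length // L.get r = w O}) = y := rfl
    rw [this, hy, Equiv.apply_symm_apply]

lemma lex_decomp : ∀ {L B : List ℕ}, List.Lex (· < ·) L B →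
    ∃ i, ∃ (_ : i ≤ L.length) (_ : i ≤ B.length), L.take i = B.take i ∧
      ((i = L.length ∧ i < B.length) ∨
        ∃ (h1 : i < L.length) (h2 : i < B.length), L.get ⟨i, h1⟩ < B.get ⟨i, h2⟩) := by
  intro L B h
  induction h with
  | nil => exact ⟨0, by simp, by simp, by simp, Or.inl ⟨rfl, by simp⟩⟩
  | @rel a l₁ b l₂ hab =>
    exact ⟨0, by simp, by simp, by simp, Or.inr ⟨by simp, by simp, by simpa using hab⟩⟩
  | @cons a l₁ l₂ h ih =>
    obtain ⟨i, hiL, hiB, htake, hrest⟩ := ih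
    refine ⟨i + 1, by simpa using hiL, by simpa using hiB, ?_, ?_⟩
    · simp only [List.take_succ_cons, htake]
    · rcases hrest with ⟨h1, h2⟩ | ⟨h1, h2, h3⟩
      · exact Or.inl ⟨by simp [h1], by simpa using h2⟩
      · refine Or.inr ⟨by simpa using h1, by simpa using h2, ?_⟩
        rw [List.get_cons_succ, List.get_cons_succ]
        exact h3



lemma parts_cast {a b : ℕ} (h : a = b) (p : Nat.Partition a) :
    ((h ▸ p : Nat.Partition b)).parts = p.parts := by subst h; rfl

def orbSetoid (g : Equiv.Perm (Fin n)) : Setoid (Fin n) :=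
  ⟨g.SameCycle, ⟨fun x => Equiv.Perm.SameCycle.refl g x, fun h => h.symm,
    fun h1 h2 => h1.trans h2⟩⟩

noncomputable instance (g : Equiv.Perm (Fin n)) : Fintype (Quotient (orbSetoid g)) :=
  Fintype.ofFinite _

noncomputable def orbSize (g : Equiv.Perm (Fin n)) (O : Quotient (orbSetoid g)) : ℕ :=
  (Finset.univ.filter (fun x => Quotient.mk (orbSetoid g) x = O)).card

lemma mk_eq_iff {g : Equiv.Perm (Fin n)} {x y : Fin n} :
    Quotient.mk (orbSetoid g) x = Quotient.mk (orbSetoid g) y ↔ g.SameCycle x y :=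
  ⟨fun h => Quotient.exact h, fun h => Quotient.sound h⟩

lemma sameCycle_fixed {g : Equiv.Perm (Fin n)} {x y : Fin n} (hx : g x = x)
    (h : g.SameCycle x y) : y = x := by
  obtain ⟨i, hi⟩ := h
  rw [← hi, Equiv.Perm.zpow_apply_eq_self_of_apply_eq_self hx]

lemma orbSize_fixed {g : Equiv.Perm (Fin n)} {x : Fin n} (hx : g x = x) :
    orbSize g (Quotient.mk (orbSetoid g) x) = 1 := by
  rw [orbSize]
  have : Finset.univ.filter (fun y => Quotient.mk (orbSetoid g) y = Quotient.mk (orbSetoid g) x)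
      = {x} := by
    ext y
    simp only [Finset.mem_filter, Finset.mem_univ, true_and, Finset.mem_singleton, mk_eq_iff]
    constructor
    · intro h; exact sameCycle_fixed hx h.symm
    · rintro rfl; exact Equiv.Perm.SameCycle.refl g _
  rw [this, Finset.card_singleton]

lemma orbSize_support {g : Equiv.Perm (Fin n)} {x : Fin n} (hx : x ∈ g.support) :
    orbSize g (Quotient.mk (orbSetoid g) x) = (g.cycleOf x).support.card := by
  rw [orbSize]
  congr 1
  ext y
  simp only [Finset.mem_filter, Finset.mem_univ, true_and, mk_eq_iff,
    Equiv.Perm.mem_support_cycleOf_iff]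
  constructor
  · intro h; exact ⟨h.symm, hx⟩
  · intro h; exact h.1.symm

noncomputable def orbToSum (g : Equiv.Perm (Fin n)) (x : Fin n) :
    {c // c ∈ g.cycleFactorsFinset} ⊕ {x : Fin n // g x = x} :=
  if h : g x = x then Sum.inr ⟨x, h⟩
  else Sum.inl ⟨g.cycleOf x,
    Equiv.Perm.cycleOf_mem_cycleFactorsFinset_iff.mpr (Equiv.Perm.mem_support.mpr h)⟩

lemma orbToSum_respects (g : Equiv.Perm (Fin n)) {x y : Fin n} (h : g.SameCycle x y) :
    orbToSum g x = orbToSum g y := by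
  by_cases h1 : g x = x
  · have := sameCycle_fixed h1 h
    subst this; rfl
  · have h2 : ¬ g y = y := by
      intro h2
      have hx : x = y := sameCycle_fixed h2 h.symm
      rw [hx] at h1; exact h1 h2
    rw [orbToSum, orbToSum, dif_neg h1, dif_neg h2]
    congr 1
    exact Subtype.ext h.cycleOf_eq

noncomputable def cycleBasept (g : Equiv.Perm (Fin n)) (c : {c // c ∈ g.cycleFactorsFinset}) :
    Fin n :=
  ((Equiv.Perm.mem_cycleFactorsFinset_iff.mp c.2).1.nonempty_support).choose

lemma cycleBasept_mem (g : Equiv.Perm (Fin n)) (c : {c // c ∈ g.cycleFactorsFinset}) :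
    cycleBasept g c ∈ c.1.support :=
  ((Equiv.Perm.mem_cycleFactorsFinset_iff.mp c.2).1.nonempty_support).choose_spec

lemma cycleBasept_mem_support (g : Equiv.Perm (Fin n)) (c : {c // c ∈ g.cycleFactorsFinset}) :
    cycleBasept g c ∈ g.support := by
  have h1 := cycleBasept_mem g c
  have h2 := (Equiv.Perm.mem_cycleFactorsFinset_iff.mp c.2).2 _ h1
  rw [Equiv.Perm.mem_support, ← h2]
  exact Equiv.Perm.mem_support.mp h1

lemma cycleOf_basept (g : Equiv.Perm (Fin n)) (c : {c // c ∈ g.cycleFactorsFinset}) :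
    g.cycleOf (cycleBasept g c) = c.1 :=
  (Equiv.Perm.cycle_is_cycleOf (cycleBasept_mem g c) c.2).symm

noncomputable def orbEquiv (g : Equiv.Perm (Fin n)) :
    Quotient (orbSetoid g) ≃ ({c // c ∈ g.cycleFactorsFinset} ⊕ {x : Fin n // g x = x}) where
  toFun := Quotient.lift (orbToSum g) (fun _ _ h => orbToSum_respects g h)
  invFun z := match z with
    | Sum.inl c => Quotient.mk (orbSetoid g) (cycleBasept g c)
    | Sum.inr x => Quotient.mk (orbSetoid g) x.1
  left_inv := by
    apply Quotient.ind
    intro x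
    by_cases h : g x = x
    · simp only [Quotient.lift_mk, orbToSum, dif_pos h]
    · have hx : x ∈ g.support := Equiv.Perm.mem_support.mpr h
      have pf := Equiv.Perm.cycleOf_mem_cycleFactorsFinset_iff.mpr hx
      simp only [Quotient.lift_mk, orbToSum, dif_neg h]
      show Quotient.mk (orbSetoid g) (cycleBasept g ⟨g.cycleOf x, pf⟩) = _
      rw [mk_eq_iff]
      have hmem := cycleBasept_mem g ⟨g.cycleOf x, pf⟩
      exact ((Equiv.Perm.mem_support_cycleOf_iff.mp hmem).1).symm
  right_inv := by
    rintro (c | x)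
    · simp only [Quotient.lift_mk]
      rw [orbToSum, dif_neg (Equiv.Perm.mem_support.mp (cycleBasept_mem_support g c))]
      congr 1
      exact Subtype.ext (cycleOf_basept g c)
    · simp only [Quotient.lift_mk]
      rw [orbToSum, dif_pos x.2]

lemma orbSize_map_eq_parts (g : Equiv.Perm (Fin n)) :
    Finset.univ.val.map (orbSize g) = (cycleTypePartition g).parts := by
  have hE := Finset.map_univ_equiv (orbEquiv g).symm
  have h1 : Finset.univ.val.map (orbSize g)
      = Finset.univ.val.map (orbSize g ∘ (orbEquiv g).symm) := by
    conv_lhs => rw [← hE]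
    rw [Finset.map_val, Multiset.map_map]
    rfl
  rw [h1, ← Finset.univ_disjSum_univ, Finset.val_disjSum, Multiset.disjSum,
    Multiset.map_add, Multiset.map_map, Multiset.map_map]
  have h2 : ∀ c : {c // c ∈ g.cycleFactorsFinset},
      ((orbSize g ∘ (orbEquiv g).symm) ∘ Sum.inl) c = c.1.support.card := by
    intro c
    show orbSize g (Quotient.mk (orbSetoid g) (cycleBasept g c)) = _
    rw [orbSize_support (cycleBasept_mem_support g c), cycleOf_basept]
  have h3 : ∀ x : {x : Fin n // g x = x},
      ((orbSize g ∘ (orbEquiv g).symm) ∘ Sum.inr) x = 1 := by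
    intro x
    show orbSize g (Quotient.mk (orbSetoid g) x.1) = 1
    exact orbSize_fixed x.2
  rw [Multiset.map_congr rfl (fun c _ => h2 c), Multiset.map_congr rfl (fun x _ => h3 x)]
  have h4 : (Finset.univ.val.map (fun c : {c // c ∈ g.cycleFactorsFinset} => c.1.support.card))
      = g.cycleType := by
    rw [Equiv.Perm.cycleType_def, Finset.univ_eq_attach, Finset.attach_val]
    exact Multiset.attach_map_val' g.cycleFactorsFinset.val (fun c => Finset.card c.support)
  have h5 : (Finset.univ.val.map (fun _ : {x : Fin n // g x = x} => 1))
      = Multiset.replicate (n - g.support.card) 1 := by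
    have hcompl : (Finset.univ.filter (fun x : Fin n => g x = x)) = g.supportᶜ := by
      ext x
      simp [Equiv.Perm.mem_support, not_not]
    rw [Multiset.map_const']
    congr 1
    calc Multiset.card (Finset.univ.val : Multiset {x : Fin n // g x = x})
        = Fintype.card {x : Fin n // g x = x} := rfl
      _ = (Finset.univ.filter (fun x : Fin n => g x = x)).card := Fintype.card_subtype _
      _ = (g.supportᶜ).card := by rw [hcompl]
      _ = n - g.support.card := by rw [Finset.card_compl, Fintype.card_fin]
  rw [h4, h5, cycleTypePartition, parts_cast, Equiv.Perm.parts_partition, Fintype.card_fin]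



lemma invariant_pow {β : Type*} (g : Equiv.Perm (Fin n)) (f : Fin n → β)
    (hf : ∀ x, f (g x) = f x) : ∀ m : ℕ, ∀ x, f ((g ^ m) x) = f x := by
  intro m
  induction m with
  | zero => intro x; simp
  | succ m ih =>
    intro x
    have : (g ^ (m + 1)) x = (g ^ m) (g x) := by
      rw [pow_succ, Equiv.Perm.mul_apply]
    rw [this, ih (g x), hf x]

lemma invariant_constant {β : Type*} (g : Equiv.Perm (Fin n)) (f : Fin n → β)
    (hf : ∀ x, f (g x) = f x) {x y : Fin n} (h : g.SameCycle x y) : f x = f y := by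
  obtain ⟨i, hi⟩ := h
  rcases i with m | m
  · rw [← hi]
    exact (invariant_pow g f hf m x).symm
  · have h2 : (g ^ (m + 1)) y = x := by
      rw [← hi, zpow_negSucc]
      simp
    rw [← h2]
    exact invariant_pow g f hf (m + 1) y

lemma fiber_card (g : Equiv.Perm (Fin n)) {ℓ : ℕ} (F : Quotient (orbSetoid g) → Fin ℓ)
    (j : Fin ℓ) :
    (Finset.univ.filter (fun x => F (Quotient.mk (orbSetoid g) x) = j)).card
      = ∑ O ∈ Finset.univ.filter (fun O => F O = j), orbSize g O := by
  rw [Finset.card_eq_sum_card_fiberwise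
    (f := fun x => Quotient.mk (orbSetoid g) x)
    (t := Finset.univ.filter (fun O => F O = j))
    (fun x hx => by
      simp only [Finset.mem_coe, Finset.mem_filter, Finset.mem_univ, true_and] at hx ⊢
      exact hx)]
  apply Finset.sum_congr rfl
  intro O hO
  simp only [Finset.mem_filter, Finset.mem_univ, true_and] at hO
  rw [orbSize]
  congr 1
  ext x
  simp only [Finset.mem_filter, Finset.mem_univ, true_and]
  constructor
  · intro h; exact h.2
  · intro h; exact ⟨by rw [h, hO], h⟩

noncomputable def permCharEquiv (lam : Nat.Partition n) (g : Equiv.Perm (Fin n)) :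
    {f : Fin n → Fin (descList lam).length //
      (∀ x, f (g x) = f x) ∧
      ∀ j, (Finset.univ.filter fun x => f x = j).card = (descList lam).get j} ≃
    {F : Quotient (orbSetoid g) → Fin (descList lam).length //
      ∀ j, (∑ O ∈ Finset.univ.filter (fun O => F O = j), orbSize g O) = (descList lam).get j} where
  toFun f := ⟨Quotient.lift f.1 (fun _ _ h => invariant_constant g f.1 f.2.1 h), by
    intro j
    rw [← fiber_card g _ j]
    exact f.2.2 j⟩
  invFun F := ⟨fun x => F.1 (Quotient.mk (orbSetoid g) x), by
    constructor
    · intro x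
      have hmk : Quotient.mk (orbSetoid g) (g x) = Quotient.mk (orbSetoid g) x :=
        Quotient.sound (Equiv.Perm.SameCycle.symm ⟨1, by simp⟩)
      show F.1 (Quotient.mk (orbSetoid g) (g x)) = F.1 (Quotient.mk (orbSetoid g) x)
      rw [hmk]
    · intro j
      rw [fiber_card g F.1 j]
      exact F.2 j⟩
  left_inv f := Subtype.ext (funext fun x => rfl)
  right_inv F := Subtype.ext (funext (Quotient.ind fun x => rfl))



lemma permChar_card_eq (lam : Nat.Partition n) (g : Equiv.Perm (Fin n)) :
    permChar lam g = Fintype.card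
      {F : Quotient (orbSetoid g) → Fin (descList lam).length //
        ∀ j, (∑ O ∈ Finset.univ.filter (fun O => F O = j), orbSize g O)
          = (descList lam).get j} :=
  Fintype.card_congr (permCharEquiv lam g)

lemma plexLE_of_permChar_ne_zero {lam : Nat.Partition n} {g : Equiv.Perm (Fin n)}
    (h : permChar lam g ≠ 0) : plexLE (cycleTypePartition g) lam := by
  set L := descList lam with hLdef
  set B := descList (cycleTypePartition g) with hBdef
  have hne : Nonempty {F : Quotient (orbSetoid g) → Fin L.length //
      ∀ j, (∑ O ∈ Finset.univ.filter (fun O => F O = j), orbSize g O) = L.get j} := by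
    rw [← Fintype.card_pos_iff]
    have hcc : permChar lam g = Fintype.card {F : Quotient (orbSetoid g) → Fin L.length //
        ∀ j, (∑ O ∈ Finset.univ.filter (fun O => F O = j), orbSize g O) = L.get j} :=
      permChar_card_eq lam g
    rw [← hcc]
    exact Nat.pos_of_ne_zero h
  obtain ⟨F, hF⟩ := hne
  have hmap : Finset.univ.val.map (orbSize g) = (B : Multiset ℕ) := by
    rw [orbSize_map_eq_parts, hBdef, coe_descList]
  obtain ⟨E, hE⟩ := exists_equiv_of_map_eq (orbSize g) B hmap
  have hdom : ∀ i, i ≤ B.length → (B.take i).sum ≤ (L.take i).sum := by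
    intro i hi
    set S := (Finset.univ.filter (fun r : Fin B.length => (r : ℕ) < i)).image E with hS
    have hSsum : (∑ O ∈ S, orbSize g O) = (B.take i).sum := by
      rw [hS, Finset.sum_image (fun a _ b _ hab => E.injective hab), sum_take_filter B i hi]
      exact Finset.sum_congr rfl (fun r _ => hE r)
    have hScard : S.card ≤ i := by
      rw [hS, Finset.card_image_of_injective _ E.injective]
      calc (Finset.univ.filter (fun r : Fin B.length => (r : ℕ) < i)).card
          = ((Finset.univ.filter (fun r : Fin B.length => (r : ℕ) < i)).image Fin.val).card :=
            (Finset.card_image_of_injective _ Fin.val_injective).symm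
        _ ≤ (Finset.range i).card := by
            apply Finset.card_le_card
            intro v hv
            simp only [Finset.mem_image, Finset.mem_filter, Finset.mem_univ, true_and] at hv
            obtain ⟨r, hr, rfl⟩ := hv
            exact Finset.mem_range.mpr hr
        _ = i := Finset.card_range i
    set T := S.image F with hT
    have hTcard : T.card ≤ i := le_trans Finset.card_image_le hScard
    have h1 : (∑ O ∈ S, orbSize g O)
        ≤ ∑ O ∈ Finset.univ.filter (fun O => F O ∈ T), orbSize g O := by
      apply Finset.sum_le_sum_of_subset
      intro O hO
      simp only [Finset.mem_filter, Finset.mem_univ, true_and]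
      exact Finset.mem_image_of_mem F hO
    have h2 : (∑ O ∈ Finset.univ.filter (fun O => F O ∈ T), orbSize g O)
        = ∑ j ∈ T, L.get j := by
      rw [← Finset.sum_fiberwise_of_maps_to
        (s := Finset.univ.filter (fun O => F O ∈ T)) (t := T) (g := F)
        (fun x hx => (Finset.mem_filter.mp hx).2) (orbSize g)]
      apply Finset.sum_congr rfl
      intro j hj
      have hfe : (Finset.univ.filter (fun O => F O ∈ T)).filter (fun O => F O = j)
          = Finset.univ.filter (fun O => F O = j) := by
        ext O
        simp only [Finset.mem_filter, Finset.mem_univ, true_and]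
        constructor
        · intro hh; exact hh.2
        · intro hh; exact ⟨by rw [hh]; exact hj, hh⟩
      rw [hfe, hF j]
    have h3 : (∑ j ∈ T, L.get j) ≤ (L.take i).sum :=
      sum_finset_le_take (descList_sorted lam) T hTcard
    omega
  by_contra hcon
  have hplex : plex lam (cycleTypePartition g) := by
    rcases plex_trichot (cycleTypePartition g) lam with h1 | h1 | h1
    · exact absurd (Or.inr h1) hcon
    · exact absurd (Or.inl h1) hcon
    · exact h1
  obtain ⟨i, hiL, hiB, htake, hrest⟩ := lex_decomp (show List.Lex (· < ·) L B from hplex)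
  have hBsum : B.sum = n := descList_sum _
  have hLsum : L.sum = n := descList_sum _
  rcases hrest with ⟨h1, h2⟩ | ⟨h1, h2, h3⟩
  · have htakeB : (B.take i).sum = n := by
      rw [← htake, h1, List.take_length, hLsum]
    have hdrop : (B.drop i) ≠ [] := by
      intro hnil
      rw [List.drop_eq_nil_iff] at hnil
      omega
    have hpos : 0 < (B.drop i).sum := by
      apply List.sum_pos
      · intro x hx; exact descList_pos _ (List.mem_of_mem_drop hx)
      · exact hdrop
    have hsplit : B.sum = (B.take i).sum + (B.drop i).sum := by
      rw [← List.sum_append, List.take_append_drop]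
    omega
  · have e1 : (B.take (i + 1)).sum = (B.take i).sum + B.get ⟨i, h2⟩ := by
      rw [← List.take_concat_get' B i h2, List.sum_append]; simp
    have e2 : (L.take (i + 1)).sum = (L.take i).sum + L.get ⟨i, h1⟩ := by
      rw [← List.take_concat_get' L i h1, List.sum_append]; simp
    have e3 : (L.take i).sum = (B.take i).sum := by rw [htake]
    have := hdom (i + 1) (Nat.succ_le_of_lt h2)
    omega



lemma permChar_diag (mu : Nat.Partition n) (g : Equiv.Perm (Fin n))
    (hg : cycleTypePartition g = mu) :
    permChar mu g = ∏ i ∈ mu.parts.toFinset, (mu.parts.count i).factorial := by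
  set L := descList mu with hLdef
  set w := orbSize g with hw
  have hmap : Finset.univ.val.map w = (L : Multiset ℕ) := by
    rw [hw, orbSize_map_eq_parts, hg, hLdef, coe_descList]
  have hcardQ : Fintype.card (Quotient (orbSetoid g)) = L.length := by
    have h1 : Fintype.card (Quotient (orbSetoid g))
        = Multiset.card (Finset.univ.val.map w) := by
      rw [Multiset.card_map]; rfl
    rw [h1, hmap, Multiset.coe_card]
  have hLpos : ∀ j : Fin L.length, 0 < L.get j :=
    fun j => descList_pos mu (List.get_mem L j)
  obtain ⟨E, hE⟩ := exists_equiv_of_map_eq w L hmap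
  have key : ∀ F : Quotient (orbSetoid g) → Fin L.length,
      (∀ j, (∑ O ∈ Finset.univ.filter (fun O => F O = j), w O) = L.get j)
      ↔ (Function.Bijective F ∧ ∀ O, L.get (F O) = w O) := by
    intro F
    have hfib : ∀ (hbij : Function.Bijective F) (j : Fin L.length),
        Finset.univ.filter (fun O => F O = j) = {(Equiv.ofBijective F hbij).symm j} := by
      intro hbij j
      ext O
      simp only [Finset.mem_filter, Finset.mem_univ, true_and, Finset.mem_singleton]
      constructor
      · intro h
        rw [← h]
        exact ((Equiv.ofBijective F hbij).symm_apply_apply O).symm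
      · intro h
        rw [h]
        exact (Equiv.ofBijective F hbij).apply_symm_apply j
    constructor
    · intro hF
      have hsurj : Function.Surjective F := by
        intro j
        by_contra hj
        push_neg at hj
        have hemp : Finset.univ.filter (fun O => F O = j) = ∅ := by
          ext O; simp [hj O]
        have h0 := hF j
        rw [hemp, Finset.sum_empty] at h0
        exact (hLpos j).ne h0
      have hbij : Function.Bijective F :=
        (Fintype.bijective_iff_surjective_and_card F).mpr
          ⟨hsurj, by rw [hcardQ, Fintype.card_fin]⟩
      refine ⟨hbij, ?_⟩
      intro O
      have h0 := hF (F O)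
      have h1 := (Equiv.ofBijective F hbij).symm_apply_apply O
      rw [Equiv.ofBijective_apply] at h1
      rw [hfib hbij (F O), Finset.sum_singleton, h1] at h0
      exact h0.symm
    · rintro ⟨hbij, hcomp⟩
      intro j
      rw [hfib hbij j, Finset.sum_singleton, ← hcomp ((Equiv.ofBijective F hbij).symm j)]
      exact congrArg L.get ((Equiv.ofBijective F hbij).apply_symm_apply j)
  have hstab : Fintype.card {F : Quotient (orbSetoid g) → Fin L.length //
      ∀ j, (∑ O ∈ Finset.univ.filter (fun O => F O = j), w O) = L.get j}
      = Fintype.card {σ : Equiv.Perm (Fin L.length) // L.get ∘ σ = L.get} := by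
    apply Fintype.card_congr
    refine Equiv.trans (Equiv.subtypeEquivRight key) ?_
    refine ⟨fun F => ⟨E.trans (Equiv.ofBijective F.1 F.2.1), ?_⟩,
            fun σ => ⟨fun O => σ.1 (E.symm O), ?_, ?_⟩, ?_, ?_⟩
    · funext r
      show L.get (F.1 (E r)) = L.get r
      rw [F.2.2 (E r), hE r]
    · exact (E.symm.trans (σ.1 : Fin L.length ≃ Fin L.length)).bijective
    · intro O
      have h1 : L.get (σ.1 (E.symm O)) = L.get (E.symm O) := congrFun σ.2 (E.symm O)
      rw [h1, ← hE (E.symm O), E.apply_symm_apply]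
    · intro F
      apply Subtype.ext
      funext O
      show F.1 (E (E.symm O)) = F.1 O
      rw [E.apply_symm_apply]
    · intro σ
      apply Subtype.ext
      apply Equiv.ext
      intro r
      show (σ.1 : Equiv.Perm (Fin L.length)) (E.symm (E r)) = σ.1 r
      rw [E.symm_apply_apply]
  have h4 : permChar mu g
      = Fintype.card {σ : Equiv.Perm (Fin L.length) // L.get ∘ σ = L.get} :=
    (permChar_card_eq mu g).trans hstab
  have hsets : mu.parts.toFinset = Finset.univ.image L.get := by
    ext i
    simp only [Multiset.mem_toFinset, Finset.mem_image, Finset.mem_univ, true_and]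
    rw [← coe_descList mu, Multiset.mem_coe, List.mem_iff_get]
  have hcnt : ∀ i, (mu.parts.count i) = Fintype.card {r : Fin L.length // L.get r = i} := by
    intro i
    rw [card_subtype_eq_count L.get i, Fin.univ_val_map, List.ofFn_get, ← coe_descList mu]
  rw [h4, DomMulAct.stabilizer_card' L.get, hsets]
  apply Finset.prod_congr rfl
  intro i _
  rw [hcnt i]



lemma exists_perm (μ : Nat.Partition n) :
    ∃ g : Equiv.Perm (Fin n), cycleTypePartition g = μ := by
  set m := μ.parts.filter (fun i => 2 ≤ i) with hm
  have h2 : ∀ a ∈ m, 2 ≤ a := fun a ha => (Multiset.mem_filter.mp ha).2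
  have hmle : m ≤ μ.parts := Multiset.filter_le _ _
  have hmsum : m.sum ≤ n := by
    obtain ⟨u, hu⟩ := Multiset.le_iff_exists_add.mp hmle
    have : μ.parts.sum = m.sum + u.sum := by rw [hu, Multiset.sum_add]
    have h3 := μ.parts_sum
    omega
  have hsum : m.sum ≤ Fintype.card (Fin n) := by rw [Fintype.card_fin]; exact hmsum
  obtain ⟨g, hg⟩ := (Equiv.Perm.exists_with_cycleType_iff (Fin n)).mpr ⟨hsum, h2⟩
  refine ⟨g, ?_⟩
  have hparts : (cycleTypePartition g).parts = m + Multiset.replicate (n - m.sum) 1 := by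
    rw [cycleTypePartition, parts_cast, Equiv.Perm.parts_partition, hg, Fintype.card_fin,
      ← Equiv.Perm.sum_cycleType g, hg]
  have hones : μ.parts.filter (fun i => ¬ 2 ≤ i)
      = Multiset.replicate (Multiset.card (μ.parts.filter (fun i => ¬ 2 ≤ i))) 1 := by
    apply Multiset.eq_replicate_card.mpr
    intro b hb
    have h4 := Multiset.mem_filter.mp hb
    have h5 := μ.parts_pos h4.1
    omega
  have hsplit : μ.parts = m + μ.parts.filter (fun i => ¬ 2 ≤ i) :=
    (Multiset.filter_add_not _ _).symm
  have hcard : Multiset.card (μ.parts.filter (fun i => ¬ 2 ≤ i)) = n - m.sum := by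
    have h5 : μ.parts.sum = m.sum + (μ.parts.filter (fun i => ¬ 2 ≤ i)).sum := by
      conv_lhs => rw [hsplit]
      rw [Multiset.sum_add]
    have h6 : (μ.parts.filter (fun i => ¬ 2 ≤ i)).sum
        = Multiset.card (μ.parts.filter (fun i => ¬ 2 ≤ i)) := by
      conv_lhs => rw [hones]
      rw [Multiset.sum_replicate, smul_eq_mul, mul_one]
    have h7 := μ.parts_sum
    omega
  apply Nat.Partition.ext
  rw [hparts, ← hcard, ← hones, ← hsplit]




theorem det_large_submatrix (n : ℕ) (X : Nat.Partition n → Nat.Partition n → ℤ)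
    (hX : IsCharTable X) (α : Nat.Partition n) :
    (Matrix.of fun lam mu : {μ : Nat.Partition n // plexLE α μ} => X lam.1 mu.1).det =
      ∏ μ : {μ : Nat.Partition n // plexLE α μ}, (bNum μ.1 : ℤ) := by
  obtain ⟨-, ⟨d, hd1, hd2, hd3⟩, -⟩ := hX
  have hgex := exists_perm (n := n)
  choose gsel hgsel using hgex
  set S := {μ : Nat.Partition n // plexLE α μ} with hSdef
  letI r : S → S → Prop := fun a b => plex a.1 b.1
  haveI hirr : IsIrrefl S r := ⟨fun a => plex_irrefl a.1⟩
  haveI htr : IsTrans S r := ⟨fun _ _ _ h1 h2 => plex_trans h1 h2⟩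
  haveI htri : IsTrichotomous S r := ⟨fun a b hab hba => by
    rcases plex_trichot a.1 b.1 with h | h | h
    · exact absurd h hab
    · exact Subtype.ext h
    · exact absurd h hba⟩
  haveI hso : IsStrictOrder S r := {}
  haveI hsto : IsStrictTotalOrder S r := {}
  letI : LinearOrder S := linearOrderOfSTO r
  have hlt : ∀ a b : S, a < b ↔ plex a.1 b.1 := fun a b => Iff.rfl
  set A : Matrix S S ℤ :=
    Matrix.of (fun lam mu : S => (permChar lam.1 (gsel mu.1) : ℤ)) with hA
  set D : Matrix S S ℤ := Matrix.of (fun lam nu : S => d lam.1 nu.1) with hD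
  set C : Matrix S S ℤ := Matrix.of (fun lam mu : S => X lam.1 mu.1) with hC
  have hmul : A = D * C := by
    ext lam mu
    rw [Matrix.mul_apply]
    show (permChar lam.1 (gsel mu.1) : ℤ) = ∑ nu : S, d lam.1 nu.1 * X nu.1 mu.1
    rw [hd3 lam.1 (gsel mu.1), hgsel mu.1]
    have hvan : ∀ x ∈ Finset.univ, d lam.1 x * X x mu.1 ≠ 0 → plexLE α x := by
      intro x _ hx
      have hdx : d lam.1 x ≠ 0 := left_ne_zero_of_mul hx
      exact plexLE_trans lam.2 (hd2 lam.1 x hdx)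
    have hmem : ∀ x, x ∈ Finset.univ.filter (fun x => plexLE α x) ↔ plexLE α x := by
      intro x; simp
    rw [← Finset.sum_filter_of_ne hvan,
      Finset.sum_subtype _ hmem (fun x => d lam.1 x * X x mu.1)]
  have hDtri : D.BlockTriangular id := by
    intro i j hij
    show d i.1 j.1 = 0
    by_contra hne
    exact not_plex_of_plexLE (hd2 i.1 j.1 hne) hij
  have hDdet : D.det = 1 := by
    rw [Matrix.det_of_upperTriangular hDtri]
    apply Finset.prod_eq_one
    intro i _
    exact hd1 i.1
  have hAtri : A.BlockTriangular OrderDual.toDual := by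
    intro i j hij
    show (permChar i.1 (gsel j.1) : ℤ) = 0
    have hij' : i < j := hij
    by_contra hne
    have hnz : permChar i.1 (gsel j.1) ≠ 0 := by exact_mod_cast hne
    have hle := plexLE_of_permChar_ne_zero hnz
    rw [hgsel j.1] at hle
    exact not_plex_of_plexLE hle hij'
  have hAdet : A.det = ∏ μ : S, (bNum μ.1 : ℤ) := by
    rw [Matrix.det_of_lowerTriangular A hAtri]
    apply Finset.prod_congr rfl
    intro i _
    show (permChar i.1 (gsel i.1) : ℤ) = (bNum i.1 : ℤ)
    rw [permChar_diag i.1 (gsel i.1) (hgsel i.1)]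
    rfl
  show C.det = ∏ μ : S, (bNum μ.1 : ℤ)
  calc C.det = 1 * C.det := (one_mul _).symm
    _ = D.det * C.det := by rw [hDdet]
    _ = (D * C).det := (Matrix.det_mul D C).symm
    _ = A.det := by rw [← hmul]
    _ = ∏ μ : S, (bNum μ.1 : ℤ) := hAdet

end SnTable
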